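/- (Lemma 2.2) Suppose V satisfies (V₁). Then for every H > 0, every R > 0 and every unit vector e ∈ ℝ^N, there exists a continuously differentiable loop q : [0,1] → ℝ^N \ {0} such that q(0) = q(1) = R e, q(t + 1/2) = -q(t) for all t ∈ [0, 1/2], and ∫₀¹ ( V(q(t)) + ½ (∇V(q(t)), q(t)) ) dt = H. -/

import Mathlib

open scoped InnerProductSpace
open Real MeasureTheory Filter Set Topology

lemma aux_inner_gradient {F : Type*} [NormedAddCommGroup F] [InnerProductSpace ℝ F]
    [CompleteSpace F] (V : F → ℝ) (x v : F) :
    ⟪gradient V x, v⟫_ℝ = fderiv ℝ V x v := by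
  rw [gradient, InnerProductSpace.toDual_symm_apply]

lemma aux_homog {F : Type*} [NormedAddCommGroup F] [InnerProductSpace ℝ F]
    [CompleteSpace F] (V : F → ℝ) (hV : ContDiffOn ℝ 1 V {0}ᶜ) (α : ℝ)
    (hV1 : ∀ x : F, x ≠ 0 → ⟪x, gradient V x⟫_ℝ = -α * V x)
    (x : F) (hx : x ≠ 0) (c : ℝ) (hc : 0 < c) :
    V (c • x) = c ^ (-α) * V x := by
  have hdiff : ∀ y : F, y ≠ 0 → DifferentiableAt ℝ V y := fun y hy =>
    (hV.differentiableOn one_ne_zero).differentiableAt (isOpen_compl_singleton.mem_nhds hy)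
  set g : ℝ → ℝ := fun c => c ^ α * V (c • x) with hg
  have key : ∀ d : ℝ, 0 < d → HasDerivAt g 0 d := by
    intro d hd
    have hdx : d • x ≠ 0 := smul_ne_zero hd.ne' hx
    have h1 : HasDerivAt (fun c : ℝ => c ^ α) (α * d ^ (α - 1)) d :=
      Real.hasDerivAt_rpow_const (Or.inl hd.ne')
    have h2 : HasDerivAt (fun c : ℝ => V (c • x)) (⟪gradient V (d • x), x⟫_ℝ) d := by
      have hf : HasFDerivAt V (fderiv ℝ V (d • x)) (d • x) := (hdiff _ hdx).hasFDerivAt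
      have hgd : HasDerivAt (fun c : ℝ => c • x) x d := by
        simpa using (hasDerivAt_id d).smul_const x
      have := hf.comp_hasDerivAt d hgd
      rw [aux_inner_gradient]; exact this
    have hin : ⟪gradient V (d • x), x⟫_ℝ = -α * V (d • x) / d := by
      have h := hV1 _ hdx
      rw [real_inner_comm, real_inner_smul_right] at h
      field_simp at h ⊢
      linarith [h]
    have hmul := h1.mul h2
    have hz : α * d ^ (α - 1) * V (d • x) + d ^ α * ⟪gradient V (d • x), x⟫_ℝ = 0 := by
      rw [hin, Real.rpow_sub_one hd.ne']
      field_simp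
      ring
    rw [hz] at hmul
    exact hmul
  have hmem : ∀ y ∈ Set.Icc (min c 1) (max c 1), 0 < y := fun y hy =>
    lt_of_lt_of_le (lt_min hc one_pos) hy.1
  have hconst := constant_of_has_deriv_right_zero
    (f := g) (a := min c 1) (b := max c 1)
    (fun y hy => ((key y (hmem y hy)).continuousAt).continuousWithinAt)
    (fun y hy => ((key y (hmem y ⟨hy.1, hy.2.le⟩)).hasDerivWithinAt))
  have h1 : g c = g (min c 1) := hconst c ⟨min_le_left _ _, le_max_left _ _⟩
  have h2 : g 1 = g (min c 1) := hconst 1 ⟨min_le_right _ _, le_max_right _ _⟩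
  have hgc : g c = V x := by
    rw [h1, ← h2]; simp [hg]
  have hcα : (0:ℝ) < c ^ α := Real.rpow_pos_of_pos hc _
  have : c ^ α * V (c • x) = V x := hgc
  rw [Real.rpow_neg hc.le]
  field_simp
  linarith [this]

set_option maxHeartbeats 1000000 in
/-- Lemma 2.2: under (V₁), for every `H > 0`, `R > 0` and unit vector `e`,
there is a `C¹` loop `q : [0,1] → ℝ^N \ {0}` with `q 0 = q 1 = R e`,
`q (t + 1/2) = -q t` on `[0, 1/2]`, and
`∫₀¹ (V (q t) + ½ ⟪∇V (q t), q t⟫) dt = H`. -/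
theorem stmt_7 {N : ℕ} (hN : 2 ≤ N) (V : EuclideanSpace ℝ (Fin N) → ℝ)
    (hV : ContDiffOn ℝ 1 V {0}ᶜ) (α : ℝ) (hα : α ∈ Set.Ioo (0 : ℝ) 2)
    (hV1 : ∀ x : EuclideanSpace ℝ (Fin N), x ≠ 0 →
      ⟪x, gradient V x⟫_ℝ = -α * V x ∧ -α * V x < 0)
    (H : ℝ) (hH : 0 < H) (R : ℝ) (hR : 0 < R)
    (e : EuclideanSpace ℝ (Fin N)) (he : ‖e‖ = 1) :
    ∃ q : ℝ → EuclideanSpace ℝ (Fin N),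
      ContDiffOn ℝ 1 q (Set.Icc 0 1) ∧
      (∀ t ∈ Set.Icc (0 : ℝ) 1, q t ≠ 0) ∧
      q 0 = R • e ∧ q 1 = R • e ∧
      (∀ t ∈ Set.Icc (0 : ℝ) (1/2), q (t + 1/2) = -q t) ∧
      ∫ t in (0:ℝ)..1, (V (q t) + (1/2) * ⟪gradient V (q t), q t⟫_ℝ) = H := by
  obtain ⟨hα0, hα2⟩ := hα
  have hVpos : ∀ x : EuclideanSpace ℝ (Fin N), x ≠ 0 → 0 < V x := by
    intro x hx
    have h := (hV1 x hx).2
    nlinarith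
  have hne : e ≠ 0 := fun h => by rw [h, norm_zero] at he; norm_num at he
  -- find a unit vector orthogonal to e
  obtain ⟨f, hf1, hef⟩ : ∃ f : EuclideanSpace ℝ (Fin N), ‖f‖ = 1 ∧ ⟪e, f⟫_ℝ = 0 := by
    have hdim : Module.finrank ℝ (EuclideanSpace ℝ (Fin N)) = N := finrank_euclideanSpace_fin
    have h1 : Module.finrank ℝ (ℝ ∙ e) = 1 := finrank_span_singleton hne
    have h2 := Submodule.finrank_add_finrank_orthogonal (K := (ℝ ∙ e))
    have hKne : (ℝ ∙ e)ᗮ ≠ ⊥ := by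
      intro hbot
      rw [hbot, h1, hdim] at h2
      simp at h2
      omega
    obtain ⟨f₀, hf₀K, hf₀⟩ := Submodule.exists_mem_ne_zero_of_ne_bot hKne
    refine ⟨‖f₀‖⁻¹ • f₀, norm_smul_inv_norm hf₀, ?_⟩
    have := (Submodule.mem_orthogonal _ _).mp hf₀K e (Submodule.mem_span_singleton_self e)
    rw [real_inner_smul_right, this, mul_zero]
  -- the unit circle curve
  set u : ℝ → EuclideanSpace ℝ (Fin N) :=
    fun t => Real.cos (2*π*t) • e + Real.sin (2*π*t) • f with hu
  have hu_norm : ∀ t, ‖u t‖ = 1 := by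
    intro t
    have hsq : ‖u t‖ ^ 2 = 1 := by
      rw [hu]
      simp only
      rw [norm_add_sq_real, norm_smul, norm_smul, real_inner_smul_left,
        real_inner_smul_right, hef, he, hf1]
      simp [mul_pow, sq_abs]
    have h0 : (0:ℝ) ≤ ‖u t‖ := norm_nonneg _
    nlinarith
  have hu_ne : ∀ t, u t ≠ 0 := fun t =>
    norm_ne_zero_iff.mp (by rw [hu_norm t]; norm_num)
  have hu_cont : Continuous u := by fun_prop
  have hu_smooth : ContDiff ℝ 1 u := by
    apply ContDiff.add
    · exact (Real.contDiff_cos.comp (by fun_prop)).smul contDiff_const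
    · exact (Real.contDiff_sin.comp (by fun_prop)).smul contDiff_const
  have hu_anti : ∀ t, u (t + 1/2) = -(u t) := by
    intro t
    rw [hu]
    simp only
    rw [show 2*π*(t+1/2) = 2*π*t + π by ring, Real.cos_add_pi, Real.sin_add_pi]
    simp only [neg_smul]
    abel
  have hRu_ne : ∀ t, R • u t ≠ 0 := fun t => smul_ne_zero hR.ne' (hu_ne t)
  have hVcont : ∀ y : EuclideanSpace ℝ (Fin N), y ≠ 0 → ContinuousAt V y := fun y hy =>
    hV.continuousOn.continuousAt (isOpen_compl_singleton.mem_nhds hy)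
  set g : ℝ → ℝ := fun t => V (R • u t) with hg
  have hg_cont : Continuous g := continuous_iff_continuousAt.mpr fun t =>
    ContinuousAt.comp (hVcont _ (hRu_ne t)) ((hu_cont.const_smul R).continuousAt)
  have hg_pos : ∀ t, 0 < g t := fun t => hVpos _ (hRu_ne t)
  -- the target value
  set T : ℝ := H / (1 - α/2) with hT_def
  have hden : 0 < 1 - α/2 := by linarith
  have hT : 0 < T := div_pos hH hden
  -- find the parameter s₀ with Φ s₀ = T
  obtain ⟨s₀, hΦs₀⟩ :
      ∃ s : ℝ, ∫ t in (0:ℝ)..1, Real.exp (-(α * Real.sin (2*π*t)^2) * s) * g t = T := by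
    obtain ⟨t₁, ht₁, hmin⟩ := (isCompact_Icc (a := (0:ℝ)) (b := 1)).exists_isMinOn
      (Set.nonempty_Icc.mpr zero_le_one) hg_cont.continuousOn
    set m : ℝ := g t₁ with hm
    have hm_pos : 0 < m := hg_pos t₁
    set F : ℝ → ℝ → ℝ := fun s t => Real.exp (-(α * Real.sin (2*π*t)^2) * s) * g t with hF
    have hFs_cont : ∀ s, Continuous (F s) := by intro s; fun_prop
    have hF_pos : ∀ s t, 0 < F s t := fun s t => mul_pos (Real.exp_pos _) (hg_pos t)
    set Φ : ℝ → ℝ := fun s => ∫ t in (0:ℝ)..1, F s t with hΦ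
    have hΦ_cont : Continuous Φ := by
      apply intervalIntegral.continuous_parametric_intervalIntegral_of_continuous'
      fun_prop
    -- lower bound at s₁
    set s₁ : ℝ := -(2/α) * Real.log (max 1 (4*T/m)) with hs₁
    have hlog : 0 ≤ Real.log (max 1 (4*T/m)) := Real.log_nonneg (le_max_left _ _)
    have hs₁le : s₁ ≤ 0 := by
      rw [hs₁]
      exact mul_nonpos_of_nonpos_of_nonneg (neg_nonpos.mpr (by positivity)) hlog
    have hsin_half : ∀ t ∈ Set.Icc (1/8 : ℝ) (3/8), (1/2 : ℝ) ≤ Real.sin (2*π*t)^2 := by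
      intro t ht
      rw [Real.sin_sq_eq_half_sub]
      have hcos : Real.cos (2*(2*π*t)) ≤ 0 := by
        apply Real.cos_nonpos_of_pi_div_two_le_of_le
        · nlinarith [Real.pi_pos, ht.1]
        · nlinarith [Real.pi_pos, ht.2]
      linarith
    have hlow : ∀ t ∈ Set.Icc (1/8 : ℝ) (3/8), 4*T ≤ F s₁ t := by
      intro t ht
      have h1 : Real.log (max 1 (4*T/m)) ≤ -(α * Real.sin (2*π*t)^2) * s₁ := by
        rw [hs₁]
        have h2 := hsin_half t ht
        have : -(α * Real.sin (2*π*t)^2) * (-(2/α) * Real.log (max 1 (4*T/m)))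
            = (2 * Real.sin (2*π*t)^2) * Real.log (max 1 (4*T/m)) := by
          field_simp
        rw [this]
        nlinarith
      have h3 : max 1 (4*T/m) ≤ Real.exp (-(α * Real.sin (2*π*t)^2) * s₁) := by
        calc max 1 (4*T/m) = Real.exp (Real.log (max 1 (4*T/m))) := by
              rw [Real.exp_log]; positivity
          _ ≤ _ := Real.exp_le_exp.mpr h1
      have h4 : 4*T/m ≤ Real.exp (-(α * Real.sin (2*π*t)^2) * s₁) :=
        le_trans (le_max_right _ _) h3
      have h5 : m ≤ g t := hmin (Set.mem_Icc.mpr ⟨by linarith [ht.1], by linarith [ht.2]⟩)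
      calc 4*T = (4*T/m) * m := by field_simp
        _ ≤ Real.exp (-(α * Real.sin (2*π*t)^2) * s₁) * g t := by
            apply mul_le_mul h4 h5 hm_pos.le (Real.exp_pos _).le
    have hint : ∀ s (a b : ℝ), IntervalIntegrable (F s) volume a b :=
      fun s a b => (hFs_cont s).intervalIntegrable a b
    have hΦ_low : T ≤ Φ s₁ := by
      have hsplit1 : (∫ t in (0:ℝ)..(1/8), F s₁ t) + ∫ t in (1/8 : ℝ)..1, F s₁ t = Φ s₁ :=
        intervalIntegral.integral_add_adjacent_intervals (hint s₁ 0 (1/8)) (hint s₁ (1/8) 1)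
      have hsplit2 : (∫ t in (1/8 : ℝ)..(3/8), F s₁ t) + ∫ t in (3/8 : ℝ)..1, F s₁ t
          = ∫ t in (1/8 : ℝ)..1, F s₁ t :=
        intervalIntegral.integral_add_adjacent_intervals (hint s₁ (1/8) (3/8)) (hint s₁ (3/8) 1)
      have hpos1 : 0 ≤ ∫ t in (0:ℝ)..(1/8), F s₁ t :=
        intervalIntegral.integral_nonneg (by norm_num) (fun t _ => (hF_pos s₁ t).le)
      have hpos2 : 0 ≤ ∫ t in (3/8 : ℝ)..1, F s₁ t :=
        intervalIntegral.integral_nonneg (by norm_num) (fun t _ => (hF_pos s₁ t).le)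
      have hmid : T ≤ ∫ t in (1/8 : ℝ)..(3/8), F s₁ t := by
        have := intervalIntegral.integral_mono_on (a := (1/8:ℝ)) (b := (3/8:ℝ))
          (f := fun _ => 4*T) (g := F s₁) (by norm_num)
          (intervalIntegrable_const) (hint s₁ (1/8) (3/8)) hlow
        rw [intervalIntegral.integral_const] at this
        simp at this
        linarith
      linarith
    -- upper bound via dominated convergence
    have htends : Tendsto Φ atTop (𝓝 0) := by
      have h0 : (0:ℝ) = ∫ t in (0:ℝ)..1, (0:ℝ) := by simp
      rw [h0]
      apply intervalIntegral.tendsto_integral_filter_of_dominated_convergence g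
      · exact Eventually.of_forall fun s => (hFs_cont s).aestronglyMeasurable.restrict
      · filter_upwards [eventually_ge_atTop (0:ℝ)] with s hs
        filter_upwards with t ht
        have h1 : Real.exp (-(α * Real.sin (2*π*t)^2) * s) ≤ 1 := by
          rw [Real.exp_le_one_iff]
          have : 0 ≤ α * Real.sin (2*π*t)^2 := by positivity
          nlinarith
        rw [Real.norm_eq_abs, abs_of_pos (hF_pos s t)]
        calc F s t ≤ 1 * g t := by
              apply mul_le_mul_of_nonneg_right h1 (hg_pos t).le
          _ = g t := one_mul _
      · exact hg_cont.intervalIntegrable 0 1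
      · have hS : ∀ᵐ t : ℝ, t ∉ ({0, 1/2, 1} : Set ℝ) := by
          have : volume ({0, 1/2, 1} : Set ℝ) = 0 :=
            Set.Countable.measure_zero (Set.toFinite _).countable _
          exact measure_eq_zero_iff_ae_notMem.mp this
        filter_upwards [hS] with t ht htI
        have hsin : Real.sin (2*π*t) ≠ 0 := by
          intro hzero
          rw [Real.sin_eq_zero_iff] at hzero
          obtain ⟨n, hn⟩ := hzero
          rw [Set.uIoc_of_le (by norm_num : (0:ℝ) ≤ 1)] at htI
          have hπ := Real.pi_pos
          have hteq : (n : ℝ) = 2 * t := by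
            have h' : (n:ℝ) * π = (2*t) * π := by linarith [hn]
            exact mul_right_cancel₀ Real.pi_ne_zero h'
          have h1 : (0:ℝ) < (n:ℝ) := by rw [hteq]; linarith [htI.1]
          have h2 : (n:ℝ) ≤ 2 := by rw [hteq]; linarith [htI.2]
          have h1' : 0 < n := by exact_mod_cast h1
          have h2' : n ≤ 2 := by exact_mod_cast h2
          interval_cases n
          · apply ht
            have h1'' : (1:ℝ) = 2 * t := by exact_mod_cast hteq
            have : t = 1/2 := by linarith
            simp [this]
          · apply ht
            have h2'' : (2:ℝ) = 2 * t := by exact_mod_cast hteq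
            have : t = 1 := by linarith
            simp [this]
        have hc : 0 < α * Real.sin (2*π*t)^2 := by positivity
        have hlim : Tendsto (fun s : ℝ => -(α * Real.sin (2*π*t)^2) * s) atTop atBot := by
          apply tendsto_id.const_mul_atTop_of_neg (by linarith)
        have h6 := (Real.tendsto_exp_atBot.comp hlim).mul_const (g t)
        simp only [zero_mul] at h6
        simpa [hF, Function.comp, neg_mul] using h6
    obtain ⟨s₂, hs₂T, hs₂ge⟩ : ∃ s₂, Φ s₂ ≤ T ∧ s₁ ≤ s₂ := by
      have h1 : ∀ᶠ s in atTop, Φ s < T := htends.eventually_lt_const hT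
      obtain ⟨s₂, h2, h3⟩ := (h1.and (eventually_ge_atTop s₁)).exists
      exact ⟨s₂, h2.le, h3⟩
    have hIVT := intermediate_value_Icc' hs₂ge hΦ_cont.continuousOn
    obtain ⟨s₀, _, hΦs₀⟩ := hIVT (Set.mem_Icc.mpr ⟨hs₂T, hΦ_low⟩)
    exact ⟨s₀, hΦs₀⟩
  -- the loop
  set ρ : ℝ → ℝ := fun t => Real.exp (s₀ * Real.sin (2*π*t)^2) with hρ
  have hρ_pos : ∀ t, 0 < ρ t := fun t => Real.exp_pos _
  set q : ℝ → EuclideanSpace ℝ (Fin N) := fun t => (R * ρ t) • u t with hq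
  have hq_eq : ∀ t, q t = ρ t • (R • u t) := by
    intro t
    rw [hq, hρ]
    simp only [smul_smul]
    ring_nf
  have hq_ne : ∀ t : ℝ, q t ≠ 0 := fun t => by
    rw [hq_eq t]
    exact smul_ne_zero (hρ_pos t).ne' (hRu_ne t)
  have hq_V : ∀ t, V (q t) = Real.exp (-(α * Real.sin (2*π*t)^2) * s₀) * g t := by
    intro t
    rw [hq_eq t, aux_homog V hV α (fun x hx => (hV1 x hx).1) _ (hRu_ne t) _ (hρ_pos t)]
    congr 1
    rw [hρ]
    simp only
    rw [← Real.exp_mul]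
    congr 1
    ring
  have hρ_smooth : ContDiff ℝ 1 ρ := by
    rw [hρ]
    exact Real.contDiff_exp.comp
      (contDiff_const.mul ((Real.contDiff_sin.comp (by fun_prop)).pow 2))
  have hq_smooth : ContDiff ℝ 1 q := (contDiff_const.mul hρ_smooth).smul hu_smooth
  have hρ_anti : ∀ t, ρ (t + 1/2) = ρ t := by
    intro t
    rw [hρ]
    simp only
    rw [show 2*π*(t+1/2) = 2*π*t + π by ring, Real.sin_add_pi]
    rw [neg_sq]
  refine ⟨q, hq_smooth.contDiffOn, fun t _ => hq_ne t, ?_, ?_, ?_, ?_⟩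
  · simp only [hq, hρ, hu]
    norm_num
  · simp only [hq, hρ, hu]
    norm_num [Real.sin_two_pi, Real.cos_two_pi]
  · intro t _
    simp only [hq, hρ, hu]
    rw [show 2*π*(t+1/2) = 2*π*t + π by ring, Real.sin_add_pi, Real.cos_add_pi, neg_sq]
    simp only [neg_smul, smul_neg, smul_add, neg_add]
  · have hpoint : ∀ t, V (q t) + 1/2 * ⟪gradient V (q t), q t⟫_ℝ = (1 - α/2) * V (q t) := by
      intro t
      have h := (hV1 (q t) (hq_ne t)).1
      rw [real_inner_comm] at h
      rw [h]; ring
    calc ∫ t in (0:ℝ)..1, (V (q t) + 1/2 * ⟪gradient V (q t), q t⟫_ℝ)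
        = ∫ t in (0:ℝ)..1, (1 - α/2) * (Real.exp (-(α * Real.sin (2*π*t)^2) * s₀) * g t) := by
          apply intervalIntegral.integral_congr
          intro t _
          show V (q t) + 1/2 * ⟪gradient V (q t), q t⟫_ℝ = _
          rw [hpoint t, hq_V t]
      _ = (1 - α/2) * T := by rw [intervalIntegral.integral_const_mul, hΦs₀]
      _ = H := by
          rw [hT_def]
          have h42 : (4 - α * 2) ≠ 0 := by linarith
          have h42' : (2 - α) ≠ 0 := by linarith
          field_simp
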